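/- Let F be analytic near 0 in R² with F(0)=F_x(0)=F_y(0)=0, F_xx(0)=1, F_xy(0)=F_yy(0)=0, satisfying identically: F_yy = (F_xy/F_xx)·F_xy, and F_xxy = (F_xy/F_xx)·F_xxx (i.e. the Hessian determinant and S := (F_xx·F_xxy − F_xy·F_xxx)/F_xx² both vanish identically, with F_xx ≠ 0). Then F is independent of y: F(x,y) = f(x) for an analytic function of one variable f with f(0)=f'(0)=0, f''(0)=1. -/

import Mathlib

noncomputable def pdx (F : ℝ × ℝ → ℝ) : ℝ × ℝ → ℝ :=
  fun p => deriv (fun x => F (x, p.2)) p.1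

noncomputable def pdy (F : ℝ × ℝ → ℝ) : ℝ × ℝ → ℝ :=
  fun p => deriv (fun y => F (p.1, y)) p.2

noncomputable def Dx (F : ℝ × ℝ → ℝ) : ℝ × ℝ → ℝ := fun p => fderiv ℝ F p (1, 0)
noncomputable def Dy (F : ℝ × ℝ → ℝ) : ℝ × ℝ → ℝ := fun p => fderiv ℝ F p (0, 1)

lemma pdx_eq_Dx {F : ℝ × ℝ → ℝ} {p : ℝ × ℝ} (h : DifferentiableAt ℝ F p) :
    pdx F p = Dx F p := by
  have hg : HasDerivAt (fun x : ℝ => (x, p.2)) ((1 : ℝ), (0 : ℝ)) p.1 :=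
    (hasDerivAt_id p.1).prodMk (hasDerivAt_const p.1 p.2)
  have := h.hasFDerivAt.comp_hasDerivAt p.1 (by simpa using hg)
  exact this.deriv

lemma pdy_eq_Dy {F : ℝ × ℝ → ℝ} {p : ℝ × ℝ} (h : DifferentiableAt ℝ F p) :
    pdy F p = Dy F p := by
  have hg : HasDerivAt (fun y : ℝ => (p.1, y)) ((0 : ℝ), (1 : ℝ)) p.2 :=
    (hasDerivAt_const p.2 p.1).prodMk (hasDerivAt_id p.2)
  have := h.hasFDerivAt.comp_hasDerivAt p.2 (by simpa using hg)
  exact this.deriv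

lemma pdx_congr {G H : ℝ × ℝ → ℝ} {s : Set (ℝ × ℝ)} (hs : IsOpen s)
    (h : Set.EqOn G H s) {p : ℝ × ℝ} (hp : p ∈ s) : pdx G p = pdx H p := by
  have hc : Continuous (fun x : ℝ => (x, p.2)) := by fun_prop
  have hmem : (fun x : ℝ => (x, p.2)) ⁻¹' s ∈ nhds p.1 :=
    (hs.preimage hc).mem_nhds (by simpa using hp)
  have : (fun x : ℝ => G (x, p.2)) =ᶠ[nhds p.1] (fun x : ℝ => H (x, p.2)) := by
    filter_upwards [hmem] with x hx using h hx
  exact this.deriv_eq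

lemma pdy_congr {G H : ℝ × ℝ → ℝ} {s : Set (ℝ × ℝ)} (hs : IsOpen s)
    (h : Set.EqOn G H s) {p : ℝ × ℝ} (hp : p ∈ s) : pdy G p = pdy H p := by
  have hc : Continuous (fun y : ℝ => (p.1, y)) := by fun_prop
  have hmem : (fun y : ℝ => (p.1, y)) ⁻¹' s ∈ nhds p.2 :=
    (hs.preimage hc).mem_nhds (by simpa using hp)
  have : (fun y : ℝ => G (p.1, y)) =ᶠ[nhds p.2] (fun y : ℝ => H (p.1, y)) := by
    filter_upwards [hmem] with y hy using h hy
  exact this.deriv_eq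

lemma analyticAt_Dx {F : ℝ × ℝ → ℝ} {p : ℝ × ℝ}
    (h : AnalyticAt ℝ F p) : AnalyticAt ℝ (Dx F) p :=
  ((ContinuousLinearMap.apply ℝ ℝ ((1:ℝ),(0:ℝ))).analyticAt _).comp h.fderiv

lemma analyticAt_Dy {F : ℝ × ℝ → ℝ} {p : ℝ × ℝ}
    (h : AnalyticAt ℝ F p) : AnalyticAt ℝ (Dy F) p :=
  ((ContinuousLinearMap.apply ℝ ℝ ((0:ℝ),(1:ℝ))).analyticAt _).comp h.fderiv

lemma Dx_Dy_comm {G : ℝ × ℝ → ℝ} {p : ℝ × ℝ} (h : AnalyticAt ℝ G p) :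
    Dx (Dy G) p = Dy (Dx G) p := by
  have hd : DifferentiableAt ℝ (fderiv ℝ G) p := h.fderiv.differentiableAt
  have h1 : fderiv ℝ (Dy G) p =
      (ContinuousLinearMap.apply ℝ ℝ ((0:ℝ),(1:ℝ))).comp (fderiv ℝ (fderiv ℝ G) p) :=
    ((ContinuousLinearMap.apply ℝ ℝ ((0:ℝ),(1:ℝ))).hasFDerivAt.comp p
      hd.hasFDerivAt).fderiv
  have h2 : fderiv ℝ (Dx G) p =
      (ContinuousLinearMap.apply ℝ ℝ ((1:ℝ),(0:ℝ))).comp (fderiv ℝ (fderiv ℝ G) p) :=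
    ((ContinuousLinearMap.apply ℝ ℝ ((1:ℝ),(0:ℝ))).hasFDerivAt.comp p
      hd.hasFDerivAt).fderiv
  have hsymm : IsSymmSndFDerivAt ℝ G p :=
    (h.contDiffAt (n := 2)).isSymmSndFDerivAt (by simp)
  have := hsymm ((1:ℝ),(0:ℝ)) ((0:ℝ),(1:ℝ))
  simp only [Dx, Dy, h1, h2, ContinuousLinearMap.comp_apply,
    ContinuousLinearMap.apply_apply]
  exact this

lemma Dx_congr {G H : ℝ × ℝ → ℝ} {s : Set (ℝ × ℝ)} (hs : IsOpen s)
    (h : Set.EqOn G H s) {p : ℝ × ℝ} (hp : p ∈ s) : Dx G p = Dx H p := by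
  have heq : G =ᶠ[nhds p] H := Filter.eventuallyEq_of_mem (hs.mem_nhds hp) h
  simp only [Dx, heq.fderiv_eq]

lemma Dy_congr {G H : ℝ × ℝ → ℝ} {s : Set (ℝ × ℝ)} (hs : IsOpen s)
    (h : Set.EqOn G H s) {p : ℝ × ℝ} (hp : p ∈ s) : Dy G p = Dy H p := by
  have heq : G =ᶠ[nhds p] H := Filter.eventuallyEq_of_mem (hs.mem_nhds hp) h
  simp only [Dy, heq.fderiv_eq]

lemma fderiv_eq_zero_of_DxDy {g : ℝ × ℝ → ℝ} {p : ℝ × ℝ}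
    (h1 : Dx g p = 0) (h2 : Dy g p = 0) : fderiv ℝ g p = 0 := by
  ext
  · simpa [Dx] using h1
  · simpa [Dy] using h2

theorem cylinder_from_vanishing_S
    (F : ℝ × ℝ → ℝ) (U : Set (ℝ × ℝ)) (hU : IsOpen U) (h0 : ((0 : ℝ), (0 : ℝ)) ∈ U)
    (hF : ∀ p ∈ U, AnalyticAt ℝ F p)
    (hval0 : F (0, 0) = 0) (hvalx : pdx F (0, 0) = 0) (hvaly : pdy F (0, 0) = 0)
    (hvalxx : pdx (pdx F) (0, 0) = 1) (hvalxy : pdy (pdx F) (0, 0) = 0)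
    (hvalyy : pdy (pdy F) (0, 0) = 0)
    (hxx : ∀ p ∈ U, pdx (pdx F) p ≠ 0)
    (hH : ∀ p ∈ U,
      pdy (pdy F) p = pdy (pdx F) p / pdx (pdx F) p * pdy (pdx F) p)
    (hS : ∀ p ∈ U,
      pdy (pdx (pdx F)) p = pdy (pdx F) p / pdx (pdx F) p * pdx (pdx (pdx F)) p) :
    ∃ f : ℝ → ℝ, AnalyticAt ℝ f 0 ∧ f 0 = 0 ∧ deriv f 0 = 0 ∧ deriv^[2] f 0 = 1
      ∧ ∀ᶠ p in nhds ((0 : ℝ), (0 : ℝ)), F p = f p.1 := by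
  obtain ⟨r, hr, hball⟩ := Metric.isOpen_iff.1 hU _ h0
  set B := Metric.ball ((0:ℝ),(0:ℝ)) r with hBdef
  have hBopen : IsOpen B := Metric.isOpen_ball
  have hBconv : Convex ℝ B := convex_ball _ _
  have h0B : ((0:ℝ),(0:ℝ)) ∈ B := Metric.mem_ball_self hr
  have hFB : ∀ p ∈ B, AnalyticAt ℝ F p := fun p hp => hF p (hball hp)
  set a := Dx (Dx F) with hadef
  set b := Dy (Dx F) with hbdef
  set c := Dy (Dy F) with hcdef
  set g : ℝ × ℝ → ℝ := fun q => b q / a q with hgdef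
  have haA : ∀ p ∈ B, AnalyticAt ℝ a p :=
    fun p hp => analyticAt_Dx (analyticAt_Dx (hFB p hp))
  have hbA : ∀ p ∈ B, AnalyticAt ℝ b p :=
    fun p hp => analyticAt_Dy (analyticAt_Dx (hFB p hp))
  have hcA : ∀ p ∈ B, AnalyticAt ℝ c p :=
    fun p hp => analyticAt_Dy (analyticAt_Dy (hFB p hp))
  -- translations of pdx/pdy to Dx/Dy on B
  have e1 : Set.EqOn (pdx F) (Dx F) B := fun p hp => pdx_eq_Dx (hFB p hp).differentiableAt
  have e2 : Set.EqOn (pdy F) (Dy F) B := fun p hp => pdy_eq_Dy (hFB p hp).differentiableAt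
  have e3 : Set.EqOn (pdx (pdx F)) a B := fun p hp => by
    rw [pdx_congr hBopen e1 hp]
    exact pdx_eq_Dx (analyticAt_Dx (hFB p hp)).differentiableAt
  have e4 : Set.EqOn (pdy (pdx F)) b B := fun p hp => by
    rw [pdy_congr hBopen e1 hp]
    exact pdy_eq_Dy (analyticAt_Dx (hFB p hp)).differentiableAt
  have e5 : Set.EqOn (pdy (pdy F)) c B := fun p hp => by
    rw [pdy_congr hBopen e2 hp]
    exact pdy_eq_Dy (analyticAt_Dy (hFB p hp)).differentiableAt
  have e6 : Set.EqOn (pdy (pdx (pdx F))) (Dy a) B := fun p hp => by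
    rw [pdy_congr hBopen e3 hp]
    exact pdy_eq_Dy (haA p hp).differentiableAt
  have e7 : Set.EqOn (pdx (pdx (pdx F))) (Dx a) B := fun p hp => by
    rw [pdx_congr hBopen e3 hp]
    exact pdx_eq_Dx (haA p hp).differentiableAt
  -- translated hypotheses
  have ha0 : ∀ p ∈ B, a p ≠ 0 := fun p hp => e3 hp ▸ hxx p (hball hp)
  have hb_eq : ∀ p ∈ B, b p = g p * a p := fun p hp =>
    (div_mul_cancel₀ _ (ha0 p hp)).symm
  have hc_eq : ∀ p ∈ B, c p = g p * b p := by
    intro p hp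
    have := hH p (hball hp)
    rwa [e3 hp, e4 hp, e5 hp] at this
  have hDya : ∀ p ∈ B, Dy a p = g p * Dx a p := by
    intro p hp
    have := hS p (hball hp)
    rwa [e3 hp, e4 hp, e6 hp, e7 hp] at this
  -- differentiability of g
  have hgd : ∀ p ∈ B, DifferentiableAt ℝ g p := by
    intro p hp
    rw [hgdef]
    exact (((hbA p hp).div (haA p hp) (ha0 p hp))).differentiableAt
  -- Clairaut pieces
  have hDxb : ∀ p ∈ B, Dx b p = Dy a p := fun p hp =>
    Dx_Dy_comm (analyticAt_Dx (hFB p hp))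
  have hXY : Set.EqOn (Dx (Dy F)) b B := fun q hq => Dx_Dy_comm (hFB q hq)
  have hDyb : ∀ p ∈ B, Dy b p = Dx c p := by
    intro p hp
    have h1 : Dx c p = Dy (Dx (Dy F)) p := Dx_Dy_comm (analyticAt_Dy (hFB p hp))
    rw [h1, Dy_congr hBopen hXY hp]
  -- product-rule formulas
  have hfb : ∀ p ∈ B, fderiv ℝ b p = g p • fderiv ℝ a p + a p • fderiv ℝ g p := by
    intro p hp
    have heq : b =ᶠ[nhds p] (fun q => g q * a q) :=
      Filter.eventuallyEq_of_mem (hBopen.mem_nhds hp) (fun q hq => hb_eq q hq)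
    rw [heq.fderiv_eq, fderiv_fun_mul (hgd p hp) ((haA p hp).differentiableAt)]
  have hfc : ∀ p ∈ B, fderiv ℝ c p = g p • fderiv ℝ b p + b p • fderiv ℝ g p := by
    intro p hp
    have heq : c =ᶠ[nhds p] (fun q => g q * b q) :=
      Filter.eventuallyEq_of_mem (hBopen.mem_nhds hp) (fun q hq => hc_eq q hq)
    rw [heq.fderiv_eq, fderiv_fun_mul (hgd p hp) ((hbA p hp).differentiableAt)]
  have hDxg : ∀ p ∈ B, Dx g p = 0 := by
    intro p hp
    have h2 : Dx b p = g p * Dx a p + a p * Dx g p := by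
      simpa [Dx] using congrArg (fun L : (ℝ × ℝ) →L[ℝ] ℝ => L ((1:ℝ),(0:ℝ))) (hfb p hp)
    have h3 : Dx b p = g p * Dx a p := (hDxb p hp).trans (hDya p hp)
    have h4 : a p * Dx g p = 0 := by linarith
    exact (mul_eq_zero.1 h4).resolve_left (ha0 p hp)
  have hDyg : ∀ p ∈ B, Dy g p = 0 := by
    intro p hp
    have h2 : Dy b p = g p * Dy a p + a p * Dy g p := by
      simpa [Dy] using congrArg (fun L : (ℝ × ℝ) →L[ℝ] ℝ => L ((0:ℝ),(1:ℝ))) (hfb p hp)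
    have h4 : Dx c p = g p * Dx b p + b p * Dx g p := by
      simpa [Dx] using congrArg (fun L : (ℝ × ℝ) →L[ℝ] ℝ => L ((1:ℝ),(0:ℝ))) (hfc p hp)
    rw [hDxg p hp, mul_zero, add_zero, hDxb p hp] at h4
    rw [hDyb p hp, h4, hDya p hp] at h2
    have h5 : a p * Dy g p = 0 := by linarith
    exact (mul_eq_zero.1 h5).resolve_left (ha0 p hp)
  -- g vanishes identically on B
  have hg00 : g ((0:ℝ),(0:ℝ)) = 0 := by
    have hb00 : b ((0:ℝ),(0:ℝ)) = 0 := by rw [← e4 h0B]; exact hvalxy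
    have : g ((0:ℝ),(0:ℝ)) = b ((0:ℝ),(0:ℝ)) / a ((0:ℝ),(0:ℝ)) := rfl
    rw [this, hb00, zero_div]
  have hg0 : ∀ p ∈ B, g p = 0 := by
    intro p hp
    have := hBconv.is_const_of_fderivWithin_eq_zero
      (fun q hq => (hgd q hq).differentiableWithinAt)
      (fun q hq => by
        rw [fderivWithin_of_isOpen hBopen hq]
        exact fderiv_eq_zero_of_DxDy (hDxg q hq) (hDyg q hq)) hp h0B
    rw [this, hg00]
  have hb0 : ∀ p ∈ B, b p = 0 := fun p hp => by rw [hb_eq p hp, hg0 p hp, zero_mul]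
  have hc0 : ∀ p ∈ B, c p = 0 := fun p hp => by rw [hc_eq p hp, hg0 p hp, zero_mul]
  -- F_y vanishes identically on B
  have hv0 : ∀ p ∈ B, Dy F p = 0 := by
    intro p hp
    have hconst := hBconv.is_const_of_fderivWithin_eq_zero
      (fun q hq => (analyticAt_Dy (hFB q hq)).differentiableAt.differentiableWithinAt)
      (fun q hq => by
        rw [fderivWithin_of_isOpen hBopen hq]
        exact fderiv_eq_zero_of_DxDy ((hXY hq).trans (hb0 q hq)) (hc0 q hq)) hp h0B
    have h00 : Dy F ((0:ℝ),(0:ℝ)) = 0 := by rw [← e2 h0B]; exact hvaly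
    rw [hconst, h00]
  -- conclusion
  refine ⟨fun x => F (x, 0), ?_, hval0, hvalx, ?_, ?_⟩
  · have hin : AnalyticAt ℝ (fun x : ℝ => ((x, (0:ℝ)) : ℝ × ℝ)) 0 :=
      analyticAt_id.prod analyticAt_const
    have := AnalyticAt.comp (g := F) (f := fun x : ℝ => ((x, (0:ℝ)) : ℝ × ℝ)) (x := 0)
      (hF _ h0) hin
    exact this
  · show deriv (deriv fun x => F (x, 0)) 0 = 1
    exact hvalxx
  · filter_upwards [hBopen.mem_nhds h0B] with p hp
    have hmem : ∀ t ∈ Metric.ball (0:ℝ) r, (p.1, t) ∈ B := by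
      intro t ht
      have hp' : dist p ((0:ℝ),(0:ℝ)) < r := hp
      rw [Prod.dist_eq, max_lt_iff] at hp'
      rw [hBdef, Metric.mem_ball, Prod.dist_eq, max_lt_iff]
      exact ⟨hp'.1, ht⟩
    have key : ∀ t ∈ Metric.ball (0:ℝ) r, HasDerivAt (fun s => F (p.1, s)) 0 t := by
      intro t ht
      have hg' : HasDerivAt (fun s : ℝ => (p.1, s)) ((0 : ℝ), (1 : ℝ)) t :=
        (hasDerivAt_const t p.1).prodMk (hasDerivAt_id t)
      have := (hFB _ (hmem t ht)).differentiableAt.hasFDerivAt.comp_hasDerivAt t hg'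
      have hval : fderiv ℝ F (p.1, t) ((0:ℝ),(1:ℝ)) = 0 := hv0 _ (hmem t ht)
      simp only [hval] at this
      exact this
    have hconst := (convex_ball (0:ℝ) r).is_const_of_fderivWithin_eq_zero
      (f := fun s => F (p.1, s))
      (fun t ht => ((key t ht).differentiableAt).differentiableWithinAt)
      (fun t ht => by
        rw [fderivWithin_of_isOpen Metric.isOpen_ball ht, (key t ht).hasFDerivAt.fderiv]
        ext
        simp)
      (by
        have hp' : dist p ((0:ℝ),(0:ℝ)) < r := hp
        rw [Prod.dist_eq, max_lt_iff] at hp'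
        simpa [Real.dist_eq] using hp'.2)
      (Metric.mem_ball_self hr)
    simpa using hconst
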